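/- Let I be a finite nonempty index set and for each i ∈ I let κ_i : ℝ → Set(ℝ^d) be a nested convex family (each κ_i(λ) compact and convex, κ_i monotone, and κ_i(λ) = ⋂_{λ'>λ} κ_i(λ') for every λ). Suppose the set L = {λ ∈ ℝ | ⋂_{i∈I} κ_i(λ) ≠ ∅} is nonempty and bounded below, and let λ* = inf L. Then the infimum is attained: ⋂_{i∈I} κ_i(λ*) ≠ ∅. -/

import Mathlib

/-- The value of a quasiconvex program is attained: if the set of levels `λ` at which the
nested convex families `κ i` have a common point is nonempty and bounded below, then the
families have a common point at the infimum level. -/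
theorem quasiconvex_program_infimum_attained (d : ℕ) {ι : Type*} [Fintype ι] [Nonempty ι]
    (κ : ι → ℝ → Set (EuclideanSpace ℝ (Fin d)))
    (hcompact : ∀ i l, IsCompact (κ i l))
    (hconvex : ∀ i l, Convex ℝ (κ i l))
    (hmono : ∀ i, Monotone (κ i))
    (hrc : ∀ i l, κ i l = ⋂ l' ∈ Set.Ioi l, κ i l')
    (L : Set ℝ) (hL : L = {l | (⋂ i, κ i l).Nonempty})
    (hne : L.Nonempty) (hbdd : BddBelow L) :
    (⋂ i, κ i (sInf L)).Nonempty := by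
  set m := sInf L with hm
  -- rewrite the goal as an intersection over levels above m
  have key : (⋂ i, κ i m) = ⋂ l : Set.Ioi m, ⋂ i, κ i l := by
    ext x
    simp only [Set.mem_iInter]
    constructor
    · intro h l i
      have := h i
      rw [hrc i m] at this
      simp only [Set.mem_iInter] at this
      exact this l l.2
    · intro h i
      rw [hrc i m]
      simp only [Set.mem_iInter]
      intro l hl
      exact h ⟨l, hl⟩ i
  rw [key]
  have hnei : Nonempty (Set.Ioi m) := ⟨⟨m + 1, by simp⟩⟩
  apply IsCompact.nonempty_iInter_of_directed_nonempty_isCompact_isClosed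
  · intro l₁ l₂
    refine ⟨⟨min l₁ l₂, Set.mem_Ioi.mpr (lt_min l₁.2 l₂.2)⟩, ?_, ?_⟩ <;>
      exact Set.iInter_mono fun i => hmono i (by simp)
  · rintro ⟨l, hl⟩
    obtain ⟨l₀, hl₀L, hl₀⟩ := Real.lt_sInf_add_pos hne (show (0:ℝ) < l - m by linarith [Set.mem_Ioi.mp hl])
    have h₀ : (⋂ i, κ i l₀).Nonempty := by rw [hL] at hl₀L; exact hl₀L
    exact h₀.mono (Set.iInter_mono fun i => hmono i (by dsimp; linarith))
  · exact fun l => (hcompact (Classical.arbitrary ι) l).of_isClosed_subset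
      (isClosed_iInter fun i => (hcompact i l).isClosed) (Set.iInter_subset _ _)
  · exact fun l => isClosed_iInter fun i => (hcompact i l).isClosed
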